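/- Let Γ = (k, A, B, C, D, E) and Γ' = (k', A', B', C', D', E') be tuples of matrices over the field F₂ with A : k×k, B : m×n, C : m×k, D : k×n, E : k×k (upper triangular data), and similarly for Γ'. Define composition by Γ' ∘ Γ = (k+k', A + B A' Bᵀ, B B', (C + B(A'+A'ᵀ)Dᵀ | B C'), (D B' stacked above D'), block matrix [[E + D A' Dᵀ, D C'],[0, E']]). Then this composition is associative: for compatible Γ, Γ', Γ'', the matrices defining Γ'' ∘ (Γ' ∘ Γ) and (Γ'' ∘ Γ') ∘ Γ agree up to replacing a matrix M by a matrix with the same value of M + Mᵀ on off-diagonal blocks (i.e., they represent the same class under the equivalence that identifies matrices whose strictly-upper-triangular reductions coincide). In particular, the first component A + B(A' + B' A'' B'ᵀ)Bᵀ, the B-component B B' B'', the C-component, the D-component, and the E-component class of both sides coincide. -/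

import Mathlib

open Matrix

section Helpers

variable {α β γ δ : Type} {R : Type*} [Semiring R]

lemma OG.fc_add (A C : Matrix δ α R) (B D : Matrix δ β R) :
    fromCols A B + fromCols C D = fromCols (A + C) (B + D) := by
  ext i (j | j) <;> simp

lemma OG.fr_add (A C : Matrix α δ R) (B D : Matrix β δ R) :
    fromRows A B + fromRows C D = fromRows (A + C) (B + D) := by
  ext (i | i) j <;> simp

omit [Semiring R] in
lemma OG.fc_assoc (M : Matrix δ α R) (N : Matrix δ β R) (P : Matrix δ γ R) :
    (fromCols M (fromCols N P)).submatrix id (Equiv.sumAssoc α β γ) =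
    fromCols (fromCols M N) P := by
  ext i ((j | j) | j) <;> simp [Equiv.sumAssoc]

omit [Semiring R] in
lemma OG.fr_assoc (M : Matrix α δ R) (N : Matrix β δ R) (P : Matrix γ δ R) :
    (fromRows M (fromRows N P)).submatrix (Equiv.sumAssoc α β γ) id =
    fromRows (fromRows M N) P := by
  ext ((i | i) | i) j <;> simp [Equiv.sumAssoc]

omit [Semiring R] in
lemma OG.fb_assoc (P : Matrix α α R) (Q₁ : Matrix α β R) (Q₂ : Matrix α γ R)
    (R₁ : Matrix β α R) (R₂ : Matrix γ α R)
    (S₁₁ : Matrix β β R) (S₁₂ : Matrix β γ R) (S₂₁ : Matrix γ β R) (S₂₂ : Matrix γ γ R) :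
    (fromBlocks P (fromCols Q₁ Q₂) (fromRows R₁ R₂)
      (fromBlocks S₁₁ S₁₂ S₂₁ S₂₂)).submatrix (Equiv.sumAssoc α β γ) (Equiv.sumAssoc α β γ) =
    fromBlocks (fromBlocks P Q₁ R₁ S₁₁) (fromRows Q₂ S₁₂) (fromCols R₂ S₂₁) S₂₂ := by
  ext ((i | i) | i) ((j | j) | j) <;> simp [fromBlocks, Equiv.sumAssoc]

omit [Semiring R] in
lemma OG.fb_assoc0 [Zero R] (P : Matrix α α R) (Q₁ : Matrix α β R) (Q₂ : Matrix α γ R)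
    (S₁₁ : Matrix β β R) (S₁₂ : Matrix β γ R) (S₂₁ : Matrix γ β R) (S₂₂ : Matrix γ γ R) :
    (fromBlocks P (fromCols Q₁ Q₂) 0
      (fromBlocks S₁₁ S₁₂ S₂₁ S₂₂)).submatrix (Equiv.sumAssoc α β γ) (Equiv.sumAssoc α β γ) =
    fromBlocks (fromBlocks P Q₁ 0 S₁₁) (fromRows Q₂ S₁₂) (fromCols 0 S₂₁) S₂₂ := by
  ext ((i | i) | i) ((j | j) | j) <;> simp [fromBlocks, Equiv.sumAssoc]

end Helpers

/-- Open-graph tuples over F₂ = ZMod 2: a tuple (A, B, C, D, E) representing a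
morphism with row object `μ`, column object `ν` and internal vertex set `κ`. -/
structure OGTuple (μ ν κ : Type) where
  A : Matrix μ μ (ZMod 2)
  B : Matrix μ ν (ZMod 2)
  C : Matrix μ κ (ZMod 2)
  D : Matrix κ ν (ZMod 2)
  E : Matrix κ κ (ZMod 2)

/-- Composition of open-graph tuples (Γ first, then Γ'). -/
def ogComp {μ ν ρ κ κ' : Type} [Fintype ν] (Γ : OGTuple μ ν κ) (Γ' : OGTuple ν ρ κ') :
    OGTuple μ ρ (κ ⊕ κ') where
  A := Γ.A + Γ.B * Γ'.A * Γ.Bᵀ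
  B := Γ.B * Γ'.B
  C := Matrix.fromCols (Γ.C + Γ.B * (Γ'.A + Γ'.Aᵀ) * Γ.Dᵀ) (Γ.B * Γ'.C)
  D := Matrix.fromRows (Γ.D * Γ'.B) Γ'.D
  E := Matrix.fromBlocks (Γ.E + Γ.D * Γ'.A * Γ.Dᵀ) (Γ.D * Γ'.C) 0 Γ'.E

/-- The equivalence on square matrices over F₂ identifying matrices with the same
strictly-upper-triangular reduction: `A ~ A'` iff `A + Aᵀ = A' + A'ᵀ` and the diagonals agree. -/
def MatRel {ι : Type} (A A' : Matrix ι ι (ZMod 2)) : Prop :=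
  A + Aᵀ = A' + A'ᵀ ∧ ∀ i, A i i = A' i i

/-- composition of open-graph tuples is associative: all the components of
`Γ'' ∘ (Γ' ∘ Γ)` and `(Γ'' ∘ Γ') ∘ Γ` agree (up to the canonical reassociation of the
internal vertex sets), the E-components agreeing up to the `[·]`-equivalence `MatRel`.
In particular the first component is `A + B(A' + B' A'' B'ᵀ)Bᵀ`. -/
theorem ogComp_assoc {m n p q k k' k'' : ℕ}
    (Γ : OGTuple (Fin m) (Fin n) (Fin k))
    (Γ' : OGTuple (Fin n) (Fin p) (Fin k'))
    (Γ'' : OGTuple (Fin p) (Fin q) (Fin k'')) :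
    letI lhs := ogComp (ogComp Γ Γ') Γ''       -- Γ'' ∘ (Γ' ∘ Γ)
    letI rhs := ogComp Γ (ogComp Γ' Γ'')       -- (Γ'' ∘ Γ') ∘ Γ
    letI e := Equiv.sumAssoc (Fin k) (Fin k') (Fin k'')
    lhs.A = Γ.A + Γ.B * (Γ'.A + Γ'.B * Γ''.A * Γ'.Bᵀ) * Γ.Bᵀ ∧
    lhs.A = rhs.A ∧
    lhs.B = Γ.B * Γ'.B * Γ''.B ∧
    lhs.B = rhs.B ∧
    lhs.C = rhs.C.submatrix id e ∧
    lhs.D = rhs.D.submatrix e id ∧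
    MatRel lhs.E (rhs.E.submatrix e e) := by
  refine ⟨?_, ?_, ?_, ?_, ?_, ?_, ?_, ?_⟩
  · simp [ogComp, Matrix.transpose_mul, Matrix.mul_add, Matrix.add_mul, Matrix.mul_assoc,
      add_assoc]
  · simp [ogComp, Matrix.transpose_mul, Matrix.mul_add, Matrix.add_mul, Matrix.mul_assoc,
      add_assoc]
  · simp [ogComp, Matrix.mul_assoc]
  · simp [ogComp, Matrix.mul_assoc]
  · simp only [ogComp, Matrix.mul_fromCols, OG.fc_assoc, Matrix.transpose_fromRows,
      Matrix.transpose_mul, Matrix.transpose_add, Matrix.transpose_transpose, OG.fc_add,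
      Matrix.mul_add, Matrix.add_mul, Matrix.mul_assoc]
    abel_nf
  · simp [ogComp, Matrix.fromRows_mul, OG.fr_assoc, Matrix.mul_assoc]
  -- E-component: the symmetrized parts agree
  · have hadd : ∀ (A B : Matrix (Fin k ⊕ (Fin k' ⊕ Fin k'')) (Fin k ⊕ (Fin k' ⊕ Fin k''))
        (ZMod 2)) (r c : (Fin k ⊕ Fin k') ⊕ Fin k'' → Fin k ⊕ (Fin k' ⊕ Fin k'')),
        A.submatrix r c + B.submatrix r c = (A + B).submatrix r c := fun _ _ _ _ => rfl
    rw [Matrix.transpose_submatrix, hadd]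
    simp only [ogComp, Matrix.fromBlocks_transpose, Matrix.fromBlocks_add,
      Matrix.fromRows_mul, Matrix.mul_fromCols, Matrix.fromRows_mul_fromCols,
      Matrix.transpose_fromRows, Matrix.transpose_fromCols, Matrix.transpose_mul,
      Matrix.transpose_add, Matrix.transpose_transpose, Matrix.transpose_zero,
      Matrix.mul_add, Matrix.add_mul, Matrix.mul_assoc, OG.fc_add, OG.fr_add,
      add_zero, zero_add,
      Matrix.fromCols_fromRows_eq_fromBlocks, Matrix.fromRows_fromCols_eq_fromBlocks,
      OG.fb_assoc]
    rw [Matrix.fromBlocks_inj, Matrix.fromBlocks_inj]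
    refine ⟨⟨?_, ?_, ?_, ?_⟩, rfl, rfl, rfl⟩ <;> abel
  -- E-component: the diagonals agree
  · have hL : (ogComp (ogComp Γ Γ') Γ'').E =
        fromBlocks
          (fromBlocks
            (Γ.E + Γ.D * (Γ'.A * Γ.Dᵀ) + Γ.D * (Γ'.B * (Γ''.A * (Γ'.Bᵀ * Γ.Dᵀ))))
            (Γ.D * Γ'.C + Γ.D * (Γ'.B * (Γ''.A * Γ'.Dᵀ)))
            (Γ'.D * (Γ''.A * (Γ'.Bᵀ * Γ.Dᵀ)))
            (Γ'.E + Γ'.D * (Γ''.A * Γ'.Dᵀ)))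
          (fromRows (Γ.D * (Γ'.B * Γ''.C)) (Γ'.D * Γ''.C)) 0 Γ''.E := by
      simp only [ogComp, Matrix.fromBlocks_add, Matrix.fromRows_mul, Matrix.mul_fromCols,
        Matrix.fromRows_mul_fromCols, Matrix.transpose_fromRows, Matrix.transpose_mul,
        Matrix.mul_assoc, Matrix.fromCols_fromRows_eq_fromBlocks,
        Matrix.fromRows_fromCols_eq_fromBlocks]
      rw [Matrix.fromBlocks_inj, Matrix.fromBlocks_inj]
      refine ⟨⟨?_, ?_, ?_, ?_⟩, rfl, rfl, rfl⟩ <;> abel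
    have hR : (ogComp Γ (ogComp Γ' Γ'')).E.submatrix (Equiv.sumAssoc (Fin k) (Fin k') (Fin k'')) (Equiv.sumAssoc (Fin k) (Fin k') (Fin k'')) =
        fromBlocks
          (fromBlocks
            (Γ.E + Γ.D * (Γ'.A * Γ.Dᵀ) + Γ.D * (Γ'.B * (Γ''.A * (Γ'.Bᵀ * Γ.Dᵀ))))
            (Γ.D * Γ'.C + Γ.D * (Γ'.B * (Γ''.A * Γ'.Dᵀ)) + Γ.D * (Γ'.B * (Γ''.Aᵀ * Γ'.Dᵀ)))
            0
            (Γ'.E + Γ'.D * (Γ''.A * Γ'.Dᵀ)))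
          (fromRows (Γ.D * (Γ'.B * Γ''.C)) (Γ'.D * Γ''.C)) (fromCols 0 0) Γ''.E := by
      simp only [ogComp, Matrix.mul_fromCols, Matrix.mul_add, Matrix.add_mul,
        Matrix.transpose_mul, Matrix.transpose_add, Matrix.transpose_transpose,
        Matrix.mul_assoc, OG.fb_assoc0]
      rw [Matrix.fromBlocks_inj, Matrix.fromBlocks_inj]
      refine ⟨⟨?_, ?_, ?_, ?_⟩, rfl, rfl, rfl⟩ <;> abel
    intro i
    rw [hL]
    show _ = (ogComp Γ (ogComp Γ' Γ'')).E.submatrix (Equiv.sumAssoc (Fin k) (Fin k') (Fin k'')) (Equiv.sumAssoc (Fin k) (Fin k') (Fin k'')) i i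
    rw [hR]
    rcases i with (i | i) | i <;> simp [fromBlocks]
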